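/- Let p > 0 and k > 1 be real numbers and let f(t) = Σ_{n=1}^∞ n^{−k} cos((1 − n^{−p}) t). Then the series U(t) = Σ_{n=1}^∞ (n^{2p}/(2n^{p+k} − n^k)) · (cos((1 − n^{−p}) t) − cos t) converges for every real t (uniformly on compact subsets of ℝ), the function U is twice continuously differentiable, and U solves the Cauchy problem U''(t) + U(t) = f(t) for all t with U(0) = 0 and U'(0) = 0. -/

import Mathlib

open Real Filter


namespace Statement2Aux

lemma abs_cos_sub_cos (a b : ℝ) : |Real.cos a - Real.cos b| ≤ |a - b| := by
  rw [Real.cos_sub_cos, abs_mul, abs_mul]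
  have h1 : |Real.sin ((a + b) / 2)| ≤ 1 := Real.abs_sin_le_one _
  have h2 : |Real.sin ((a - b) / 2)| ≤ |a - b| / 2 := by
    have := Real.abs_sin_le_abs (x := (a - b) / 2)
    rwa [abs_div, abs_two] at this
  have h3 : |(-2 : ℝ)| = 2 := by norm_num
  rw [h3]
  nlinarith [abs_nonneg (Real.sin ((a + b) / 2)), abs_nonneg (Real.sin ((a - b) / 2)),
    abs_nonneg (a - b)]

lemma abs_sin_sub_sin (a b : ℝ) : |Real.sin a - Real.sin b| ≤ |a - b| := by
  rw [Real.sin_sub_sin, abs_mul, abs_mul]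
  have h1 : |Real.cos ((a + b) / 2)| ≤ 1 := Real.abs_cos_le_one _
  have h2 : |Real.sin ((a - b) / 2)| ≤ |a - b| / 2 := by
    have := Real.abs_sin_le_abs (x := (a - b) / 2)
    rwa [abs_div, abs_two] at this
  have h3 : |(2 : ℝ)| = 2 := by norm_num
  rw [h3]
  nlinarith [abs_nonneg (Real.sin ((a - b) / 2)), abs_nonneg (a - b)]

noncomputable def aa (p k : ℝ) (n : ℕ) : ℝ :=
  ((n : ℝ) + 1) ^ (2 * p) / (2 * ((n : ℝ) + 1) ^ (p + k) - ((n : ℝ) + 1) ^ k)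

noncomputable def ww (p : ℝ) (n : ℕ) : ℝ := 1 - ((n : ℝ) + 1) ^ (-p)

noncomputable def g0 (p k : ℝ) (n : ℕ) (t : ℝ) : ℝ :=
  aa p k n * (Real.cos (ww p n * t) - Real.cos t)
noncomputable def g1 (p k : ℝ) (n : ℕ) (t : ℝ) : ℝ :=
  aa p k n * (Real.sin t - ww p n * Real.sin (ww p n * t))
noncomputable def g2 (p k : ℝ) (n : ℕ) (t : ℝ) : ℝ :=
  aa p k n * (Real.cos t - ww p n ^ 2 * Real.cos (ww p n * t))

section

variable {p k : ℝ}

lemma hm1 (n : ℕ) : (1 : ℝ) ≤ (n : ℝ) + 1 := by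
  have := n.cast_nonneg (α := ℝ); linarith

lemma hm0 (n : ℕ) : (0 : ℝ) < (n : ℝ) + 1 := by positivity

lemma hA1 (hp : 0 ≤ p) (n : ℕ) : (1 : ℝ) ≤ ((n : ℝ) + 1) ^ p := by
  have := Real.rpow_le_rpow_of_exponent_le (hm1 n) hp
  rwa [Real.rpow_zero] at this

lemma denom_pos (hp : 0 < p) (n : ℕ) : 0 < 2 * ((n : ℝ) + 1) ^ (p + k) - ((n : ℝ) + 1) ^ k := by
  rw [Real.rpow_add (hm0 n)]
  have hA := hA1 hp.le n
  have hK : (0 : ℝ) < ((n : ℝ) + 1) ^ k := Real.rpow_pos_of_pos (hm0 n) k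
  nlinarith

lemma aa_nonneg (hp : 0 < p) (n : ℕ) : 0 ≤ aa p k n := by
  apply div_nonneg (Real.rpow_nonneg (hm0 n).le _) (denom_pos hp n).le

lemma key1 (hp : 0 < p) (n : ℕ) : aa p k n * (1 - ww p n ^ 2) = ((n : ℝ) + 1) ^ (-k) := by
  have hA := hA1 hp.le n
  have hA0 : (0 : ℝ) < ((n : ℝ) + 1) ^ p := Real.rpow_pos_of_pos (hm0 n) p
  have hK : (0 : ℝ) < ((n : ℝ) + 1) ^ k := Real.rpow_pos_of_pos (hm0 n) k
  have e1 : ((n : ℝ) + 1) ^ (2 * p) = ((n : ℝ) + 1) ^ p * ((n : ℝ) + 1) ^ p := by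
    rw [two_mul, Real.rpow_add (hm0 n)]
  have e2 : ((n : ℝ) + 1) ^ (p + k) = ((n : ℝ) + 1) ^ p * ((n : ℝ) + 1) ^ k :=
    Real.rpow_add (hm0 n) _ _
  have e3 : ((n : ℝ) + 1) ^ (-p) = (((n : ℝ) + 1) ^ p)⁻¹ := Real.rpow_neg (hm0 n).le _
  have e4 : ((n : ℝ) + 1) ^ (-k) = (((n : ℝ) + 1) ^ k)⁻¹ := Real.rpow_neg (hm0 n).le _
  set A := ((n : ℝ) + 1) ^ p
  set K := ((n : ℝ) + 1) ^ k
  unfold aa ww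
  rw [e1, e2, e3, e4]
  have h5 : 2 * (A * K) - K ≠ 0 := by nlinarith
  rw [show ((n : ℝ) + 1) ^ k = K from rfl]
  have h6 : 2 * A - 1 ≠ 0 := by nlinarith
  have h7 : K ≠ 0 := hK.ne'
  rw [show 2 * (A * K) - K = K * (2 * A - 1) by ring]
  rw [div_mul_eq_mul_div, div_eq_iff (mul_ne_zero h7 h6)]
  have hu : A * A⁻¹ = 1 := mul_inv_cancel₀ hA0.ne'
  have hv : K⁻¹ * K = 1 := inv_mul_cancel₀ h7
  linear_combination (2 * A - A * A⁻¹ - 1) * hu - (2 * A - 1) * hv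

lemma key2 (hp : 0 < p) (n : ℕ) : aa p k n * ((n : ℝ) + 1) ^ (-p) ≤ ((n : ℝ) + 1) ^ (-k) := by
  have hA := hA1 hp.le n
  have hA0 : (0 : ℝ) < ((n : ℝ) + 1) ^ p := Real.rpow_pos_of_pos (hm0 n) p
  have hK : (0 : ℝ) < ((n : ℝ) + 1) ^ k := Real.rpow_pos_of_pos (hm0 n) k
  have e1 : ((n : ℝ) + 1) ^ (2 * p) = ((n : ℝ) + 1) ^ p * ((n : ℝ) + 1) ^ p := by
    rw [two_mul, Real.rpow_add (hm0 n)]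
  have e2 : ((n : ℝ) + 1) ^ (p + k) = ((n : ℝ) + 1) ^ p * ((n : ℝ) + 1) ^ k :=
    Real.rpow_add (hm0 n) _ _
  have e3 : ((n : ℝ) + 1) ^ (-p) = (((n : ℝ) + 1) ^ p)⁻¹ := Real.rpow_neg (hm0 n).le _
  have e4 : ((n : ℝ) + 1) ^ (-k) = (((n : ℝ) + 1) ^ k)⁻¹ := Real.rpow_neg (hm0 n).le _
  set A := ((n : ℝ) + 1) ^ p
  set K := ((n : ℝ) + 1) ^ k
  unfold aa
  rw [e1, e2, e3, e4]
  have h5 : 2 * (A * K) - K ≠ 0 := by nlinarith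
  have e6 : A * A / (2 * (A * K) - K) * A⁻¹ = A / (K * (2 * A - 1)) := by
    have hAne : A ≠ 0 := hA0.ne'
    calc A * A / (2 * (A * K) - K) * A⁻¹ = A * (A * A⁻¹) / (2 * (A * K) - K) := by ring
      _ = A / (K * (2 * A - 1)) := by rw [mul_inv_cancel₀ hAne, mul_one]; ring_nf
  rw [e6, inv_eq_one_div]
  rw [div_le_div_iff₀ (by nlinarith) hK]
  nlinarith

lemma ww_nonneg (hp : 0 < p) (n : ℕ) : 0 ≤ ww p n := by
  have : ((n : ℝ) + 1) ^ (-p) ≤ 1 := by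
    have := Real.rpow_le_rpow_of_exponent_le (hm1 n) (by linarith : -p ≤ 0)
    rwa [Real.rpow_zero] at this
  simp only [ww]; linarith

lemma ww_le_one (hp : 0 < p) (n : ℕ) : ww p n ≤ 1 := by
  have : (0 : ℝ) < ((n : ℝ) + 1) ^ (-p) := Real.rpow_pos_of_pos (hm0 n) _
  simp only [ww]; linarith

lemma one_sub_ww (n : ℕ) : 1 - ww p n = ((n : ℝ) + 1) ^ (-p) := by simp [ww]

lemma hasDerivAt_g0 (n : ℕ) (t : ℝ) : HasDerivAt (g0 p k n) (g1 p k n t) t := by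
  have h1 : HasDerivAt (fun t : ℝ => Real.cos (ww p n * t))
      (-Real.sin (ww p n * t) * ww p n) t := by
    have := ((hasDerivAt_id t).const_mul (ww p n)).cos
    simpa using this
  have h2 := (h1.sub (Real.hasDerivAt_cos t)).const_mul (aa p k n)
  refine h2.congr_deriv ?_
  simp only [g1]; ring

lemma hasDerivAt_g1 (n : ℕ) (t : ℝ) : HasDerivAt (g1 p k n) (g2 p k n t) t := by
  have h1 : HasDerivAt (fun t : ℝ => Real.sin (ww p n * t))
      (Real.cos (ww p n * t) * ww p n) t := by
    have := ((hasDerivAt_id t).const_mul (ww p n)).sin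
    simpa using this
  have h2 := ((Real.hasDerivAt_sin t).sub (h1.const_mul (ww p n))).const_mul (aa p k n)
  refine h2.congr_deriv ?_
  simp only [g2]; ring

lemma bound0 (hp : 0 < p) (n : ℕ) (t : ℝ) :
    |g0 p k n t| ≤ ((n : ℝ) + 1) ^ (-k) * (|t| + 1) := by
  have haa := aa_nonneg (k := k) hp n
  have hK : (0 : ℝ) ≤ ((n : ℝ) + 1) ^ (-k) := (Real.rpow_pos_of_pos (hm0 n) _).le
  have h1 : |Real.cos (ww p n * t) - Real.cos t| ≤ ((n : ℝ) + 1) ^ (-p) * |t| := by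
    have := abs_cos_sub_cos (ww p n * t) t
    have e : |ww p n * t - t| = ((n : ℝ) + 1) ^ (-p) * |t| := by
      rw [show ww p n * t - t = -(((n : ℝ) + 1) ^ (-p)) * t by rw [← one_sub_ww]; ring,
        abs_mul, abs_neg, abs_of_nonneg (Real.rpow_pos_of_pos (hm0 n) _).le]
    linarith [this, e.le, e.ge]
  calc |g0 p k n t| = aa p k n * |Real.cos (ww p n * t) - Real.cos t| := by
        rw [g0, abs_mul, abs_of_nonneg haa]
    _ ≤ aa p k n * (((n : ℝ) + 1) ^ (-p) * |t|) := by
        exact mul_le_mul_of_nonneg_left h1 haa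
    _ = aa p k n * ((n : ℝ) + 1) ^ (-p) * |t| := by ring
    _ ≤ ((n : ℝ) + 1) ^ (-k) * |t| := mul_le_mul_of_nonneg_right (key2 hp n) (abs_nonneg t)
    _ ≤ ((n : ℝ) + 1) ^ (-k) * (|t| + 1) := by nlinarith

lemma bound1 (hp : 0 < p) (n : ℕ) (t : ℝ) :
    |g1 p k n t| ≤ ((n : ℝ) + 1) ^ (-k) * (|t| + 1) := by
  have haa := aa_nonneg (k := k) hp n
  have hw0 := ww_nonneg hp n
  have hw1 := ww_le_one hp n
  have hK : (0 : ℝ) ≤ ((n : ℝ) + 1) ^ (-k) := (Real.rpow_pos_of_pos (hm0 n) _).le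
  have key := key2 (k := k) hp n
  have h1 : |Real.sin t - ww p n * Real.sin (ww p n * t)|
      ≤ ((n : ℝ) + 1) ^ (-p) * (|t| + 1) := by
    have e0 : Real.sin t - ww p n * Real.sin (ww p n * t)
        = (Real.sin t - Real.sin (ww p n * t)) + (1 - ww p n) * Real.sin (ww p n * t) := by
      ring
    have h2 : |Real.sin t - Real.sin (ww p n * t)| ≤ ((n : ℝ) + 1) ^ (-p) * |t| := by
      have := abs_sin_sub_sin t (ww p n * t)
      have e : |t - ww p n * t| = ((n : ℝ) + 1) ^ (-p) * |t| := by
        rw [show t - ww p n * t = (((n : ℝ) + 1) ^ (-p)) * t by rw [← one_sub_ww]; ring,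
          abs_mul, abs_of_nonneg (Real.rpow_pos_of_pos (hm0 n) _).le]
      linarith [this, e.le, e.ge]
    have h3 : |(1 - ww p n) * Real.sin (ww p n * t)| ≤ ((n : ℝ) + 1) ^ (-p) := by
      rw [abs_mul, one_sub_ww, abs_of_nonneg (Real.rpow_pos_of_pos (hm0 n) _).le]
      have := Real.abs_sin_le_one (ww p n * t)
      nlinarith [(Real.rpow_pos_of_pos (hm0 n) (-p)).le]
    calc |Real.sin t - ww p n * Real.sin (ww p n * t)|
        ≤ |Real.sin t - Real.sin (ww p n * t)| + |(1 - ww p n) * Real.sin (ww p n * t)| := by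
          rw [e0]; exact abs_add_le _ _
      _ ≤ ((n : ℝ) + 1) ^ (-p) * |t| + ((n : ℝ) + 1) ^ (-p) := by linarith
      _ = ((n : ℝ) + 1) ^ (-p) * (|t| + 1) := by ring
  calc |g1 p k n t| = aa p k n * |Real.sin t - ww p n * Real.sin (ww p n * t)| := by
        rw [g1, abs_mul, abs_of_nonneg haa]
    _ ≤ aa p k n * (((n : ℝ) + 1) ^ (-p) * (|t| + 1)) := mul_le_mul_of_nonneg_left h1 haa
    _ = aa p k n * ((n : ℝ) + 1) ^ (-p) * (|t| + 1) := by ring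
    _ ≤ ((n : ℝ) + 1) ^ (-k) * (|t| + 1) := by
        apply mul_le_mul_of_nonneg_right key
        positivity

lemma bound2 (hp : 0 < p) (n : ℕ) (t : ℝ) :
    |g2 p k n t| ≤ ((n : ℝ) + 1) ^ (-k) * (|t| + 1) := by
  have haa := aa_nonneg (k := k) hp n
  have hw0 := ww_nonneg hp n
  have hw1 := ww_le_one hp n
  have hK : (0 : ℝ) ≤ ((n : ℝ) + 1) ^ (-k) := (Real.rpow_pos_of_pos (hm0 n) _).le
  have key := key2 (k := k) hp n
  have keyeq := key1 (k := k) hp n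
  have h2 : |Real.cos t - Real.cos (ww p n * t)| ≤ ((n : ℝ) + 1) ^ (-p) * |t| := by
    have := abs_cos_sub_cos t (ww p n * t)
    have e : |t - ww p n * t| = ((n : ℝ) + 1) ^ (-p) * |t| := by
      rw [show t - ww p n * t = (((n : ℝ) + 1) ^ (-p)) * t by rw [← one_sub_ww]; ring,
        abs_mul, abs_of_nonneg (Real.rpow_pos_of_pos (hm0 n) _).le]
    linarith [this, e.le, e.ge]
  have h3 : |(1 - ww p n ^ 2) * Real.cos (ww p n * t)| ≤ 1 - ww p n ^ 2 := by
    rw [abs_mul, abs_of_nonneg (by nlinarith : (0:ℝ) ≤ 1 - ww p n ^ 2)]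
    have h4 := Real.abs_cos_le_one (ww p n * t)
    have h5 : (0:ℝ) ≤ 1 - ww p n ^ 2 := by nlinarith
    nlinarith [mul_le_mul_of_nonneg_left h4 h5]
  have e0 : Real.cos t - ww p n ^ 2 * Real.cos (ww p n * t)
      = (Real.cos t - Real.cos (ww p n * t)) + (1 - ww p n ^ 2) * Real.cos (ww p n * t) := by
    ring
  calc |g2 p k n t| = aa p k n * |Real.cos t - ww p n ^ 2 * Real.cos (ww p n * t)| := by
        rw [g2, abs_mul, abs_of_nonneg haa]
    _ ≤ aa p k n * (((n : ℝ) + 1) ^ (-p) * |t| + (1 - ww p n ^ 2)) := by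
        apply mul_le_mul_of_nonneg_left _ haa
        calc |Real.cos t - ww p n ^ 2 * Real.cos (ww p n * t)|
            ≤ |Real.cos t - Real.cos (ww p n * t)|
              + |(1 - ww p n ^ 2) * Real.cos (ww p n * t)| := by rw [e0]; exact abs_add_le _ _
          _ ≤ ((n : ℝ) + 1) ^ (-p) * |t| + (1 - ww p n ^ 2) := by linarith
    _ = aa p k n * ((n : ℝ) + 1) ^ (-p) * |t| + aa p k n * (1 - ww p n ^ 2) := by ring
    _ ≤ ((n : ℝ) + 1) ^ (-k) * |t| + ((n : ℝ) + 1) ^ (-k) := by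
        have := mul_le_mul_of_nonneg_right key (abs_nonneg t)
        rw [keyeq]; linarith
    _ = ((n : ℝ) + 1) ^ (-k) * (|t| + 1) := by ring

lemma ode_eq (hp : 0 < p) (n : ℕ) (t : ℝ) :
    g2 p k n t + g0 p k n t = ((n : ℝ) + 1) ^ (-k) * Real.cos (ww p n * t) := by
  have := key1 (k := k) hp n
  calc g2 p k n t + g0 p k n t
      = aa p k n * (1 - ww p n ^ 2) * Real.cos (ww p n * t) := by
        simp only [g0, g2]; ring
    _ = ((n : ℝ) + 1) ^ (-k) * Real.cos (ww p n * t) := by rw [this]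

lemma summable_K (hk : 1 < k) : Summable (fun n : ℕ => ((n : ℝ) + 1) ^ (-k)) := by
  have h : Summable (fun n : ℕ => ((n : ℝ)) ^ (-k)) :=
    Real.summable_nat_rpow.2 (by linarith)
  have := (summable_nat_add_iff 1).2 h
  apply this.congr
  intro n
  push_cast
  ring_nf

lemma tlu (hp : 0 < p) (hk : 1 < k) (h : ℕ → ℝ → ℝ)
    (hb : ∀ n t, |h n t| ≤ ((n : ℝ) + 1) ^ (-k) * (|t| + 1)) :
    TendstoLocallyUniformly
      (fun N : ℕ => fun t : ℝ => ∑ n ∈ Finset.range N, h n t)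
      (fun t : ℝ => ∑' n : ℕ, h n t) atTop := by
  rw [tendstoLocallyUniformly_iff_forall_isCompact]
  intro s hs
  obtain ⟨r, hr⟩ := hs.isBounded.subset_closedBall (0 : ℝ)
  apply tendstoUniformlyOn_tsum_nat ((summable_K hk).mul_right (r + 1))
  intro n x hx
  have hxr : |x| ≤ r := by
    have := hr hx
    rwa [Metric.mem_closedBall, Real.dist_eq, sub_zero] at this
  rw [Real.norm_eq_abs]
  refine (hb n x).trans ?_
  have hK : (0 : ℝ) ≤ ((n : ℝ) + 1) ^ (-k) := (Real.rpow_pos_of_pos (hm0 n) _).le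
  nlinarith

lemma summable_g0 (hp : 0 < p) (hk : 1 < k) (t : ℝ) :
    Summable (fun n : ℕ => g0 p k n t) := by
  apply Summable.of_norm_bounded ((summable_K hk).mul_right (|t| + 1))
  intro n; rw [Real.norm_eq_abs]; exact bound0 hp n t

lemma summable_g1 (hp : 0 < p) (hk : 1 < k) (t : ℝ) :
    Summable (fun n : ℕ => g1 p k n t) := by
  apply Summable.of_norm_bounded ((summable_K hk).mul_right (|t| + 1))
  intro n; rw [Real.norm_eq_abs]; exact bound1 hp n t

lemma summable_g2 (hp : 0 < p) (hk : 1 < k) (t : ℝ) :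
    Summable (fun n : ℕ => g2 p k n t) := by
  apply Summable.of_norm_bounded ((summable_K hk).mul_right (|t| + 1))
  intro n; rw [Real.norm_eq_abs]; exact bound2 hp n t

lemma hasDerivAt_tsum_g0 (hp : 0 < p) (hk : 1 < k) (t : ℝ) :
    HasDerivAt (fun x : ℝ => ∑' n : ℕ, g0 p k n x) (∑' n : ℕ, g1 p k n t) t := by
  have h0 : (0 : ℝ) < |t| + 1 := by positivity
  apply hasDerivAt_tsum_of_isPreconnected
    ((summable_K hk).mul_right ((|t| + 1) + 1))
    (Metric.isOpen_ball (x := (0 : ℝ)) (ε := |t| + 1))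
    ((convex_ball (0 : ℝ) (|t| + 1)).isPreconnected)
    (fun n y _ => hasDerivAt_g0 n y)
    ?_ (Metric.mem_ball_self h0) (summable_g0 hp hk 0) ?_
  · intro n y hy
    rw [Metric.mem_ball, Real.dist_eq, sub_zero] at hy
    rw [Real.norm_eq_abs]
    refine (bound1 hp n y).trans ?_
    have hK : (0 : ℝ) ≤ ((n : ℝ) + 1) ^ (-k) := (Real.rpow_pos_of_pos (hm0 n) _).le
    nlinarith
  · rw [Metric.mem_ball, Real.dist_eq, sub_zero]
    linarith [abs_nonneg t]

lemma hasDerivAt_tsum_g1 (hp : 0 < p) (hk : 1 < k) (t : ℝ) :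
    HasDerivAt (fun x : ℝ => ∑' n : ℕ, g1 p k n x) (∑' n : ℕ, g2 p k n t) t := by
  have h0 : (0 : ℝ) < |t| + 1 := by positivity
  apply hasDerivAt_tsum_of_isPreconnected
    ((summable_K hk).mul_right ((|t| + 1) + 1))
    (Metric.isOpen_ball (x := (0 : ℝ)) (ε := |t| + 1))
    ((convex_ball (0 : ℝ) (|t| + 1)).isPreconnected)
    (fun n y _ => hasDerivAt_g1 n y)
    ?_ (Metric.mem_ball_self h0) (summable_g1 hp hk 0) ?_
  · intro n y hy
    rw [Metric.mem_ball, Real.dist_eq, sub_zero] at hy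
    rw [Real.norm_eq_abs]
    refine (bound2 hp n y).trans ?_
    have hK : (0 : ℝ) ≤ ((n : ℝ) + 1) ^ (-k) := (Real.rpow_pos_of_pos (hm0 n) _).le
    nlinarith
  · rw [Metric.mem_ball, Real.dist_eq, sub_zero]
    linarith [abs_nonneg t]


end

end Statement2Aux


open Statement2Aux in
/-- For `p > 0`, `k > 1`, the series
`U(t) = Σ_{n=1}^∞ (n^{2p}/(2n^{p+k} − n^k)) (cos((1 − n^{−p}) t) − cos t)`
converges for every `t` (uniformly on compact subsets of `ℝ`), is twice continuously
differentiable, and solves the Cauchy problem `U'' + U = f`, `U(0) = 0`, `U'(0) = 0`,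
where `f(t) = Σ_{n=1}^∞ n^{−k} cos((1 − n^{−p}) t)`. -/
theorem statement2 (p k : ℝ) (hp : 0 < p) (hk : 1 < k)
    (f U : ℝ → ℝ)
    (hf : f = fun t : ℝ => ∑' n : ℕ,
      ((n : ℝ) + 1) ^ (-k) * Real.cos ((1 - ((n : ℝ) + 1) ^ (-p)) * t))
    (hU : U = fun t : ℝ => ∑' n : ℕ,
      (((n : ℝ) + 1) ^ (2 * p) / (2 * ((n : ℝ) + 1) ^ (p + k) - ((n : ℝ) + 1) ^ k)) *
        (Real.cos ((1 - ((n : ℝ) + 1) ^ (-p)) * t) - Real.cos t)) :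
    (∀ t : ℝ, Summable (fun n : ℕ =>
      (((n : ℝ) + 1) ^ (2 * p) / (2 * ((n : ℝ) + 1) ^ (p + k) - ((n : ℝ) + 1) ^ k)) *
        (Real.cos ((1 - ((n : ℝ) + 1) ^ (-p)) * t) - Real.cos t))) ∧
    TendstoLocallyUniformly
      (fun N : ℕ => fun t : ℝ => ∑ n ∈ Finset.range N,
        (((n : ℝ) + 1) ^ (2 * p) / (2 * ((n : ℝ) + 1) ^ (p + k) - ((n : ℝ) + 1) ^ k)) *
          (Real.cos ((1 - ((n : ℝ) + 1) ^ (-p)) * t) - Real.cos t))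
      U atTop ∧
    ContDiff ℝ 2 U ∧
    (∀ t : ℝ, deriv (deriv U) t + U t = f t) ∧
    U 0 = 0 ∧ deriv U 0 = 0 := by
  subst hf hU
  have hderiv : deriv (fun t : ℝ => ∑' n : ℕ, g0 p k n t)
      = fun t : ℝ => ∑' n : ℕ, g1 p k n t :=
    funext fun t => (hasDerivAt_tsum_g0 hp hk t).deriv
  have hderiv2 : deriv (fun t : ℝ => ∑' n : ℕ, g1 p k n t)
      = fun t : ℝ => ∑' n : ℕ, g2 p k n t :=
    funext fun t => (hasDerivAt_tsum_g1 hp hk t).deriv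
  have hdiff0 : Differentiable ℝ (fun t : ℝ => ∑' n : ℕ, g0 p k n t) :=
    fun t => (hasDerivAt_tsum_g0 hp hk t).differentiableAt
  have hdiff1 : Differentiable ℝ (fun t : ℝ => ∑' n : ℕ, g1 p k n t) :=
    fun t => (hasDerivAt_tsum_g1 hp hk t).differentiableAt
  have hcont2 : Continuous (fun t : ℝ => ∑' n : ℕ, g2 p k n t) := by
    apply (tlu hp hk (g2 p k) (bound2 hp)).continuous
    apply Filter.Frequently.of_forall
    intro N
    apply continuous_finset_sum
    intro n _
    unfold g2
    fun_prop
  refine ⟨fun t => summable_g0 hp hk t, tlu hp hk (g0 p k) (bound0 hp), ?_, ?_, ?_, ?_⟩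
  · show ContDiff ℝ 2 (fun t : ℝ => ∑' n : ℕ, g0 p k n t)
    rw [show (2 : WithTop ℕ∞) = 1 + 1 from rfl, contDiff_succ_iff_deriv]
    refine ⟨hdiff0, by simp, ?_⟩
    rw [hderiv]
    exact contDiff_one_iff_deriv.2 ⟨hdiff1, by rw [hderiv2]; exact hcont2⟩
  · intro t
    show deriv (deriv (fun t : ℝ => ∑' n : ℕ, g0 p k n t)) t
      + (∑' n : ℕ, g0 p k n t) = _
    rw [hderiv, hderiv2]
    rw [← Summable.tsum_add (summable_g2 hp hk t) (summable_g0 hp hk t)]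
    exact tsum_congr fun n => ode_eq hp n t
  · show (∑' n : ℕ, g0 p k n 0) = 0
    have h : (fun n : ℕ => g0 p k n 0) = fun _ => (0 : ℝ) :=
      funext fun n => by simp [g0]
    rw [h, tsum_zero]
  · show deriv (fun t : ℝ => ∑' n : ℕ, g0 p k n t) 0 = 0
    rw [hderiv]
    show (∑' n : ℕ, g1 p k n 0) = 0
    have h : (fun n : ℕ => g1 p k n 0) = fun _ => (0 : ℝ) :=
      funext fun n => by simp [g1]
    rw [h, tsum_zero]
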